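/- With C, D as above and f, g the 8×8 matrices of the previous statement, the element f⁵ g⁻² acts on the generalized eigenspace blocks with rates: on the C-blocks it acts like C⁵(C²)⁻² = C (expanding, since 2+√3 > 1), and on the D-blocks like D⁵(D³)⁻² = D⁻¹ (so the block with eigenvalue 3+2√2 becomes contracting). Hence the unstable space of f is E¹ ⊕ E³ while the unstable space of f⁵g⁻² is E¹ ⊕ E⁴, where E¹,E² are the eigenspace-blocks of C for eigenvalues 2±√3 and E³,E⁴ those of D for 3±2√2. In particular f and f⁵g⁻² have different unstable spaces. -/

import Mathlib

open Matrix

noncomputable def Cmat : Matrix (Fin 2) (Fin 2) ℝ := !![2, 3; 1, 2]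

noncomputable def Dmat : Matrix (Fin 2) (Fin 2) ℝ := !![3, 4; 2, 3]

noncomputable def fmat :
    Matrix ((Fin 2 ⊕ Fin 2) ⊕ (Fin 2 ⊕ Fin 2)) ((Fin 2 ⊕ Fin 2) ⊕ (Fin 2 ⊕ Fin 2)) ℝ :=
  fromBlocks (fromBlocks Cmat 1 0 Cmat) 0 0 (fromBlocks Dmat 0 0 Dmat)

noncomputable def gmat :
    Matrix ((Fin 2 ⊕ Fin 2) ⊕ (Fin 2 ⊕ Fin 2)) ((Fin 2 ⊕ Fin 2) ⊕ (Fin 2 ⊕ Fin 2)) ℝ :=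
  fromBlocks (fromBlocks (Cmat ^ 2) 0 0 (Cmat ^ 2)) 0 0
    (fromBlocks (Dmat ^ 3) 1 0 (Dmat ^ 3))

/-- The unstable space of a real matrix: the sum of the generalized eigenspaces for
eigenvalues of absolute value greater than one. -/
noncomputable def unstableSpace {ι : Type*} [Fintype ι] [DecidableEq ι]
    (A : Matrix ι ι ℝ) : Submodule ℝ (ι → ℝ) :=
  ⨆ μ : {μ : ℝ // 1 < |μ|}, Module.End.maxGenEigenspace (Matrix.toLin' A) (μ : ℝ)

/-! ### Auxiliary definitions -/

/-- Explicit inverse of `gmat`. -/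
noncomputable def Ginv :
    Matrix ((Fin 2 ⊕ Fin 2) ⊕ (Fin 2 ⊕ Fin 2)) ((Fin 2 ⊕ Fin 2) ⊕ (Fin 2 ⊕ Fin 2)) ℝ :=
  fromBlocks (fromBlocks !![7, -12; -4, 7] 0 0 !![7, -12; -4, 7]) 0 0
    (fromBlocks !![99, -140; -70, 99] !![-19601, 27720; 13860, -19601] 0 !![99, -140; -70, 99])

/-- Explicit form of `fmat ^ 5 * (gmat⁻¹) ^ 2`. -/
noncomputable def Hmat :
    Matrix ((Fin 2 ⊕ Fin 2) ⊕ (Fin 2 ⊕ Fin 2)) ((Fin 2 ⊕ Fin 2) ⊕ (Fin 2 ⊕ Fin 2)) ℝ :=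
  fromBlocks (fromBlocks Cmat !![5, 0; 0, 5] 0 Cmat) 0 0
    (fromBlocks !![3, -4; -2, 3] !![-1154, 1632; 816, -1154] 0 !![3, -4; -2, 3])

/-- The four coordinate injections of `ℝ²` into `ℝ⁸`. -/
noncomputable def jv1 (x : Fin 2 → ℝ) : ((Fin 2 ⊕ Fin 2) ⊕ (Fin 2 ⊕ Fin 2)) → ℝ :=
  Sum.elim (Sum.elim x 0) 0
noncomputable def jv2 (x : Fin 2 → ℝ) : ((Fin 2 ⊕ Fin 2) ⊕ (Fin 2 ⊕ Fin 2)) → ℝ :=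
  Sum.elim (Sum.elim 0 x) 0
noncomputable def jv3 (x : Fin 2 → ℝ) : ((Fin 2 ⊕ Fin 2) ⊕ (Fin 2 ⊕ Fin 2)) → ℝ :=
  Sum.elim 0 (Sum.elim x 0)
noncomputable def jv4 (x : Fin 2 → ℝ) : ((Fin 2 ⊕ Fin 2) ⊕ (Fin 2 ⊕ Fin 2)) → ℝ :=
  Sum.elim 0 (Sum.elim 0 x)

/-! ### Generic auxiliary lemmas -/

lemma zero_fin_two' : !![(0:ℝ),0;0,0] = 0 := by ext i j; fin_cases i <;> fin_cases j <;> rfl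

lemma elim_add {α β : Type*} (a c : α → ℝ) (b d : β → ℝ) :
    Sum.elim a b + Sum.elim c d = Sum.elim (a + c) (b + d) := by
  funext i; cases i <;> rfl

lemma elim_smul {α β : Type*} (μ : ℝ) (a : α → ℝ) (b : β → ℝ) :
    μ • Sum.elim a b = Sum.elim (μ • a) (μ • b) := by
  funext i; cases i <;> rfl

lemma det2 (μ a b c d : ℝ) :
    (!![a,b;c,d] - μ • (1 : Matrix (Fin 2) (Fin 2) ℝ)).det = (a-μ)*(d-μ)-b*c := by
  rw [Matrix.one_fin_two, Matrix.smul_of]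
  norm_num [Matrix.det_fin_two_of, Matrix.smul_cons, sub_eq_add_neg]

lemma inj2 (M : Matrix (Fin 2) (Fin 2) ℝ) (h : M.det ≠ 0) :
    ∀ x : Fin 2 → ℝ, M *ᵥ x = 0 → x = 0 := by
  intro x hx
  have := Matrix.mulVec_injective_iff_isUnit.mpr
    ((Matrix.isUnit_iff_isUnit_det _).mpr (isUnit_iff_ne_zero.mpr h))
  exact this (by simpa using hx)

lemma injBlocks {l m : Type*} [Fintype l] [Fintype m] (P : Matrix l l ℝ) (Q : Matrix l m ℝ)
    (S : Matrix m m ℝ) (hP : ∀ x, P *ᵥ x = 0 → x = 0) (hS : ∀ y, S *ᵥ y = 0 → y = 0) :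
    ∀ v : l ⊕ m → ℝ, (fromBlocks P Q 0 S) *ᵥ v = 0 → v = 0 := by
  intro v hv
  rw [← Sum.elim_comp_inl_inr v, fromBlocks_mulVec] at hv
  have h2 : S *ᵥ (v ∘ Sum.inr) = 0 := by
    funext j
    have := congrFun hv (Sum.inr j)
    simpa using this
  have hv2 : v ∘ Sum.inr = 0 := hS _ h2
  have h1 : P *ᵥ (v ∘ Sum.inl) = 0 := by
    funext i
    have := congrFun hv (Sum.inl i)
    simp only [Sum.elim_inl, Pi.add_apply, hv2, Matrix.mulVec_zero] at this
    simpa using this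
  have hv1 : v ∘ Sum.inl = 0 := hP _ h1
  funext i
  cases i with
  | inl i => exact congrFun hv1 i
  | inr j => exact congrFun hv2 j

lemma maxGenEig_eq_bot {ι : Type*} [Fintype ι] [DecidableEq ι] (A : Matrix ι ι ℝ) (μ : ℝ)
    (h : ∀ v, (A - μ • 1) *ᵥ v = 0 → v = 0) :
    Module.End.maxGenEigenspace (Matrix.toLin' A) μ = ⊥ := by
  rw [eq_bot_iff]
  intro x hx
  obtain ⟨k, hk⟩ := (Module.End.mem_maxGenEigenspace _ _ _).mp hx
  have hM : Matrix.toLin' A - μ • (1 : Module.End ℝ (ι → ℝ)) =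
      Matrix.toLin' (A - μ • (1 : Matrix ι ι ℝ)) := by
    rw [map_sub, _root_.map_smul, Matrix.toLin'_one]; rfl
  have hinj : Function.Injective ⇑(Matrix.toLin' (A - μ • (1 : Matrix ι ι ℝ))) := by
    rw [injective_iff_map_eq_zero']
    intro v
    constructor
    · intro hv
      refine h v ?_
      rw [Matrix.sub_mulVec, Matrix.smul_mulVec, Matrix.one_mulVec]
      simpa [Matrix.toLin'_apply] using hv
    · intro hv; simp [hv]
  have hinjk : ∀ n : ℕ, Function.Injective
      ⇑((Matrix.toLin' (A - μ • (1 : Matrix ι ι ℝ))) ^ n) := by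
    intro n
    induction n with
    | zero => intro a b hab; simpa using hab
    | succ n ih =>
      rw [pow_succ]
      intro a b hab
      rw [Module.End.mul_apply, Module.End.mul_apply] at hab
      exact hinj (ih hab)
  rw [hM] at hk
  have := hinjk k (by simpa using hk : _ = ((Matrix.toLin' (A - μ • 1)) ^ k) 0)
  simpa using this

lemma mem_max_of_eigen {V : Type*} [AddCommGroup V] [Module ℝ V] (φ : Module.End ℝ V)
    (μ : ℝ) (a : V) (ha : φ a = μ • a) : a ∈ φ.maxGenEigenspace μ := by
  rw [Module.End.mem_maxGenEigenspace]
  exact ⟨1, by simp [ha]⟩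

lemma mem_max_of_gen2 {V : Type*} [AddCommGroup V] [Module ℝ V] (φ : Module.End ℝ V)
    (μ c : ℝ) (a b : V) (ha : φ a = μ • a) (hb : φ b = μ • b + c • a) :
    b ∈ φ.maxGenEigenspace μ := by
  rw [Module.End.mem_maxGenEigenspace]
  refine ⟨2, ?_⟩
  have h1 : (φ - μ • (1 : Module.End ℝ V)) b = c • a := by
    simp [hb]
  rw [pow_two, Module.End.mul_apply, h1]
  simp [ha]

lemma four_spaces {V : Type*} [AddCommGroup V] [Module ℝ V] [FiniteDimensional ℝ V]
    (h8 : Module.finrank ℝ V = 8) (φ : Module.End ℝ V) (μ : Fin 4 → ℝ)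
    (hμ : Function.Injective μ) (S : Fin 4 → Submodule ℝ V)
    (hle : ∀ i, S i ≤ φ.maxGenEigenspace (μ i)) (hdim : ∀ i, Module.finrank ℝ (S i) = 2) :
    ∀ i, φ.maxGenEigenspace (μ i) = S i := by
  set E : Fin 4 → Submodule ℝ V := fun i => φ.maxGenEigenspace (μ i) with hE
  have hind : iSupIndep E := (φ.independent_maxGenEigenspace).comp hμ
  have hge : ∀ i, 2 ≤ Module.finrank ℝ (E i) := fun i => by
    rw [← hdim i]; exact Submodule.finrank_mono (hle i)
  have d01 : Disjoint (E 0) (E 1) := hind.pairwiseDisjoint (by decide)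
  have d2 : Disjoint (E 0 ⊔ E 1) (E 2) := by
    have := hind.disjoint_biSup (x := 2) (y := {0, 1}) (by decide)
    exact Disjoint.mono_left (sup_le (le_biSup E (by simp)) (le_biSup E (by simp))) this.symm
  have d3 : Disjoint (E 0 ⊔ E 1 ⊔ E 2) (E 3) := by
    have := hind.disjoint_biSup (x := 3) (y := {0, 1, 2}) (by decide)
    exact Disjoint.mono_left
      (sup_le (sup_le (le_biSup E (by simp)) (le_biSup E (by simp))) (le_biSup E (by simp)))
      this.symm
  have f01 : Module.finrank ℝ ↑(E 0 ⊔ E 1) = Module.finrank ℝ (E 0) + Module.finrank ℝ (E 1) := by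
    have := Submodule.finrank_sup_add_finrank_inf_eq (E 0) (E 1)
    rw [d01.eq_bot, finrank_bot, add_zero] at this
    exact this
  have f012 : Module.finrank ℝ ↑(E 0 ⊔ E 1 ⊔ E 2)
      = Module.finrank ℝ ↑(E 0 ⊔ E 1) + Module.finrank ℝ (E 2) := by
    have := Submodule.finrank_sup_add_finrank_inf_eq (E 0 ⊔ E 1) (E 2)
    rw [d2.eq_bot, finrank_bot, add_zero] at this
    exact this
  have f0123 : Module.finrank ℝ ↑(E 0 ⊔ E 1 ⊔ E 2 ⊔ E 3)
      = Module.finrank ℝ ↑(E 0 ⊔ E 1 ⊔ E 2) + Module.finrank ℝ (E 3) := by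
    have := Submodule.finrank_sup_add_finrank_inf_eq (E 0 ⊔ E 1 ⊔ E 2) (E 3)
    rw [d3.eq_bot, finrank_bot, add_zero] at this
    exact this
  have htot : Module.finrank ℝ ↑(E 0 ⊔ E 1 ⊔ E 2 ⊔ E 3) ≤ 8 := h8 ▸ Submodule.finrank_le _
  have hsum : Module.finrank ℝ (E 0) + Module.finrank ℝ (E 1) + Module.finrank ℝ (E 2)
      + Module.finrank ℝ (E 3) ≤ 8 := by rw [← f01, ← f012, ← f0123]; exact htot
  have heq : ∀ i, Module.finrank ℝ (E i) = 2 := by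
    have h0 := hge 0; have h1 := hge 1; have h2 := hge 2; have h3 := hge 3
    intro i
    have hi : i = 0 ∨ i = 1 ∨ i = 2 ∨ i = 3 := by fin_cases i <;> simp
    rcases hi with rfl | rfl | rfl | rfl <;> omega
  intro i
  exact (Submodule.eq_of_le_of_finrank_le (hle i) (by rw [hdim i, heq i])).symm

/-! ### Concrete matrix computations -/

lemma C2inv : (Cmat ^ 2)⁻¹ = !![7, -12; -4, 7] := by
  apply inv_eq_right_inv
  norm_num [Cmat, pow_succ, Matrix.mul_fin_two]
  exact Matrix.one_fin_two.symm

lemma Dinv : Dmat⁻¹ = !![3, -4; -2, 3] := by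
  apply inv_eq_right_inv
  norm_num [Dmat, Matrix.mul_fin_two]
  exact Matrix.one_fin_two.symm

lemma D3inv : (Dmat ^ 3)⁻¹ = !![99, -140; -70, 99] := by
  apply inv_eq_right_inv
  norm_num [Dmat, pow_succ, Matrix.mul_fin_two]
  exact Matrix.one_fin_two.symm

lemma gmat_inv : gmat⁻¹ = Ginv := by
  apply inv_eq_right_inv
  rw [gmat, Ginv]
  norm_num [fromBlocks_multiply, Cmat, Dmat, pow_succ, Matrix.mul_fin_two, Matrix.one_fin_two]
  rw [zero_fin_two', show !![(1:ℝ),0;0,1] = 1 from Matrix.one_fin_two.symm, fromBlocks_one,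
    fromBlocks_one]

lemma hH : fmat ^ 5 * (gmat⁻¹) ^ 2 = Hmat := by
  rw [gmat_inv]
  rw [show fmat ^ 5 = fmat*fmat*fmat*fmat*fmat by
    rw [show (5:ℕ) = 4+1 from rfl, pow_succ, show (4:ℕ) = 3+1 from rfl, pow_succ,
      show (3:ℕ) = 2+1 from rfl, pow_succ, pow_two], pow_two]
  rw [fmat, Ginv, Hmat]
  norm_num [fromBlocks_multiply, Cmat, Dmat, Matrix.mul_fin_two, Matrix.one_fin_two]

/-- Block decomposition of `fmat - μ • 1`. -/
lemma blockf (μ : ℝ) : fmat - μ • 1 =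
    fromBlocks (fromBlocks (Cmat - μ • 1) 1 0 (Cmat - μ • 1)) 0 0
      (fromBlocks (Dmat - μ • 1) 0 0 (Dmat - μ • 1)) := by
  rw [fmat, ← fromBlocks_one, ← @fromBlocks_one (Fin 2) (Fin 2)]
  simp only [fromBlocks_smul, smul_zero, sub_eq_add_neg, fromBlocks_neg, neg_zero,
    fromBlocks_add, add_zero]

/-- Block decomposition of `Hmat - μ • 1`. -/
lemma blockH (μ : ℝ) : Hmat - μ • 1 =
    fromBlocks (fromBlocks (Cmat - μ • 1) !![5, 0; 0, 5] 0 (Cmat - μ • 1)) 0 0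
      (fromBlocks (!![3, -4; -2, 3] - μ • 1) !![-1154, 1632; 816, -1154] 0
        (!![3, -4; -2, 3] - μ • 1)) := by
  rw [Hmat, ← fromBlocks_one, ← @fromBlocks_one (Fin 2) (Fin 2)]
  simp only [fromBlocks_smul, smul_zero, sub_eq_add_neg, fromBlocks_neg, neg_zero,
    fromBlocks_add, add_zero]

/-! ### Square-root bounds and eigenvalue arithmetic -/

lemma s3 : Real.sqrt 3 * Real.sqrt 3 = 3 := Real.mul_self_sqrt (by norm_num)
lemma s2 : Real.sqrt 2 * Real.sqrt 2 = 2 := Real.mul_self_sqrt (by norm_num)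
lemma s3bd : 1.7 < Real.sqrt 3 ∧ Real.sqrt 3 < 1.8 := by
  constructor <;> nlinarith [s3, Real.sqrt_nonneg 3]
lemma s2bd : 1.41 < Real.sqrt 2 ∧ Real.sqrt 2 < 1.415 := by
  constructor <;> nlinarith [s2, Real.sqrt_nonneg 2]

/-! ### Eigenvector equations (2-dimensional) -/

lemma eigC1 : Cmat *ᵥ ![Real.sqrt 3, 1] = (2 + Real.sqrt 3) • ![Real.sqrt 3, 1] := by
  funext i
  fin_cases i <;>
    simp [Cmat, Matrix.mulVec, dotProduct, Fin.sum_univ_two] <;>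
    linarith [s3]

lemma eigC2 : Cmat *ᵥ ![Real.sqrt 3, -1] = (2 - Real.sqrt 3) • ![Real.sqrt 3, -1] := by
  funext i
  fin_cases i <;>
    simp [Cmat, Matrix.mulVec, dotProduct, Fin.sum_univ_two] <;>
    linarith [s3]

lemma eigD1 : Dmat *ᵥ ![Real.sqrt 2, 1] = (3 + 2 * Real.sqrt 2) • ![Real.sqrt 2, 1] := by
  funext i
  fin_cases i <;>
    simp [Dmat, Matrix.mulVec, dotProduct, Fin.sum_univ_two] <;>
    linarith [s2]

lemma eigD2 : Dmat *ᵥ ![Real.sqrt 2, -1] = (3 - 2 * Real.sqrt 2) • ![Real.sqrt 2, -1] := by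
  funext i
  fin_cases i <;>
    simp [Dmat, Matrix.mulVec, dotProduct, Fin.sum_univ_two] <;>
    linarith [s2]

lemma eigD'1 : !![(3:ℝ), -4; -2, 3] *ᵥ ![Real.sqrt 2, 1]
    = (3 - 2 * Real.sqrt 2) • ![Real.sqrt 2, 1] := by
  funext i
  fin_cases i <;>
    simp [Matrix.mulVec, dotProduct, Fin.sum_univ_two] <;>
    linarith [s2]

lemma eigD'2 : !![(3:ℝ), -4; -2, 3] *ᵥ ![Real.sqrt 2, -1]
    = (3 + 2 * Real.sqrt 2) • ![Real.sqrt 2, -1] := by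
  funext i
  fin_cases i <;>
    simp [Matrix.mulVec, dotProduct, Fin.sum_univ_two] <;>
    linarith [s2]

lemma eigK (x : Fin 2 → ℝ) : !![(5:ℝ), 0; 0, 5] *ᵥ x = (5:ℝ) • x := by
  funext i
  fin_cases i <;> simp [Matrix.mulVec, dotProduct, Fin.sum_univ_two]

lemma eigB1 : !![(-1154:ℝ), 1632; 816, -1154] *ᵥ ![Real.sqrt 2, 1]
    = (-1154 + 816 * Real.sqrt 2) • ![Real.sqrt 2, 1] := by
  funext i
  fin_cases i <;>
    simp [Matrix.mulVec, dotProduct, Fin.sum_univ_two] <;>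
    linarith [s2]

lemma eigB2 : !![(-1154:ℝ), 1632; 816, -1154] *ᵥ ![Real.sqrt 2, -1]
    = (-1154 - 816 * Real.sqrt 2) • ![Real.sqrt 2, -1] := by
  funext i
  fin_cases i <;>
    simp [Matrix.mulVec, dotProduct, Fin.sum_univ_two] <;>
    linarith [s2]

/-! ### Action of the block matrices on the coordinate injections -/

section mulvec

variable (C' K' D' B' : Matrix (Fin 2) (Fin 2) ℝ) (x : Fin 2 → ℝ)

lemma mv1 : (fromBlocks (fromBlocks C' K' 0 C') 0 0 (fromBlocks D' B' 0 D')) *ᵥ jv1 x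
    = jv1 (C' *ᵥ x) := by
  simp [jv1, fromBlocks_mulVec, Matrix.mulVec_zero, Matrix.zero_mulVec]

lemma mv2 : (fromBlocks (fromBlocks C' K' 0 C') 0 0 (fromBlocks D' B' 0 D')) *ᵥ jv2 x
    = jv1 (K' *ᵥ x) + jv2 (C' *ᵥ x) := by
  simp [jv1, jv2, fromBlocks_mulVec, Matrix.mulVec_zero, Matrix.zero_mulVec, elim_add]

lemma mv3 : (fromBlocks (fromBlocks C' K' 0 C') 0 0 (fromBlocks D' B' 0 D')) *ᵥ jv3 x
    = jv3 (D' *ᵥ x) := by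
  simp [jv3, fromBlocks_mulVec, Matrix.mulVec_zero, Matrix.zero_mulVec]

lemma mv4 : (fromBlocks (fromBlocks C' K' 0 C') 0 0 (fromBlocks D' B' 0 D')) *ᵥ jv4 x
    = jv3 (B' *ᵥ x) + jv4 (D' *ᵥ x) := by
  simp [jv3, jv4, fromBlocks_mulVec, Matrix.mulVec_zero, Matrix.zero_mulVec, elim_add]

end mulvec

lemma jv1_smul (μ : ℝ) (x : Fin 2 → ℝ) : jv1 (μ • x) = μ • jv1 x := by
  simp [jv1, elim_smul]
lemma jv2_smul (μ : ℝ) (x : Fin 2 → ℝ) : jv2 (μ • x) = μ • jv2 x := by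
  simp [jv2, elim_smul]
lemma jv3_smul (μ : ℝ) (x : Fin 2 → ℝ) : jv3 (μ • x) = μ • jv3 x := by
  simp [jv3, elim_smul]
lemma jv4_smul (μ : ℝ) (x : Fin 2 → ℝ) : jv4 (μ • x) = μ • jv4 x := by
  simp [jv4, elim_smul]

/-! ### fmat in block form -/

lemma fmat_blocks : fmat = fromBlocks (fromBlocks Cmat 1 0 Cmat) 0 0
    (fromBlocks Dmat 0 0 Dmat) := rfl

lemma Hmat_blocks : Hmat = fromBlocks (fromBlocks Cmat !![5,0;0,5] 0 Cmat) 0 0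
    (fromBlocks !![3,-4;-2,3] !![-1154,1632;816,-1154] 0 !![3,-4;-2,3]) := rfl

/-! ### Linear independence of the generating pairs -/

lemma li_jv12 (x : Fin 2 → ℝ) (hx : x 1 = 1 ∨ x 1 = -1) :
    LinearIndependent ℝ ![jv1 x, jv2 x] := by
  rw [linearIndependent_fin2]
  constructor
  · intro h
    have h' := congrFun h (Sum.inl (Sum.inr 1))
    simp [jv1, jv2] at h'
    rcases hx with h1 | h1 <;> rw [h1] at h' <;> norm_num at h'
  · intro c h
    have h' := congrFun h (Sum.inl (Sum.inl 1))
    simp [jv1, jv2] at h'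
    rcases hx with h1 | h1 <;> rw [h1] at h' <;> norm_num at h'

lemma li_jv34 (x : Fin 2 → ℝ) (hx : x 1 = 1 ∨ x 1 = -1) :
    LinearIndependent ℝ ![jv3 x, jv4 x] := by
  rw [linearIndependent_fin2]
  constructor
  · intro h
    have h' := congrFun h (Sum.inr (Sum.inr 1))
    simp [jv3, jv4] at h'
    rcases hx with h1 | h1 <;> rw [h1] at h' <;> norm_num at h'
  · intro c h
    have h' := congrFun h (Sum.inr (Sum.inl 1))
    simp [jv3, jv4] at h'
    rcases hx with h1 | h1 <;> rw [h1] at h' <;> norm_num at h'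


/-! ### More auxiliary lemmas -/

lemma Cmat_def : Cmat = !![(2:ℝ), 3; 1, 2] := rfl
lemma Dmat_def : Dmat = !![(3:ℝ), 4; 2, 3] := rfl

lemma jv1_zero : jv1 0 = 0 := by funext i; rcases i with (i | i) | (i | i) <;> rfl
lemma jv2_zero : jv2 0 = 0 := by funext i; rcases i with (i | i) | (i | i) <;> rfl
lemma jv3_zero : jv3 0 = 0 := by funext i; rcases i with (i | i) | (i | i) <;> rfl
lemma jv4_zero : jv4 0 = 0 := by funext i; rcases i with (i | i) | (i | i) <;> rfl

/-! ### Action of `fmat` and `Hmat` on the coordinate injections -/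

lemma f_jv1 (x : Fin 2 → ℝ) : Matrix.toLin' fmat (jv1 x) = jv1 (Cmat *ᵥ x) := by
  rw [Matrix.toLin'_apply]; exact mv1 Cmat 1 Dmat 0 x

lemma f_jv2 (x : Fin 2 → ℝ) : Matrix.toLin' fmat (jv2 x) = jv1 x + jv2 (Cmat *ᵥ x) := by
  rw [Matrix.toLin'_apply]
  have := mv2 Cmat 1 Dmat 0 x
  rwa [Matrix.one_mulVec] at this

lemma f_jv3 (x : Fin 2 → ℝ) : Matrix.toLin' fmat (jv3 x) = jv3 (Dmat *ᵥ x) := by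
  rw [Matrix.toLin'_apply]; exact mv3 Cmat 1 Dmat 0 x

lemma f_jv4 (x : Fin 2 → ℝ) : Matrix.toLin' fmat (jv4 x) = jv4 (Dmat *ᵥ x) := by
  rw [Matrix.toLin'_apply]
  have := mv4 Cmat 1 Dmat 0 x
  rwa [Matrix.zero_mulVec, jv3_zero, zero_add] at this

lemma H_jv1 (x : Fin 2 → ℝ) : Matrix.toLin' Hmat (jv1 x) = jv1 (Cmat *ᵥ x) := by
  rw [Matrix.toLin'_apply]
  exact mv1 Cmat !![5,0;0,5] !![3,-4;-2,3] !![-1154,1632;816,-1154] x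

lemma H_jv2 (x : Fin 2 → ℝ) :
    Matrix.toLin' Hmat (jv2 x) = (5:ℝ) • jv1 x + jv2 (Cmat *ᵥ x) := by
  rw [Matrix.toLin'_apply]
  have := mv2 Cmat !![5,0;0,5] !![3,-4;-2,3] !![-1154,1632;816,-1154] x
  rwa [eigK, jv1_smul] at this

lemma H_jv3 (x : Fin 2 → ℝ) :
    Matrix.toLin' Hmat (jv3 x) = jv3 (!![(3:ℝ),-4;-2,3] *ᵥ x) := by
  rw [Matrix.toLin'_apply]
  exact mv3 Cmat !![5,0;0,5] !![3,-4;-2,3] !![-1154,1632;816,-1154] x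

lemma H_jv4 (x : Fin 2 → ℝ) :
    Matrix.toLin' Hmat (jv4 x)
      = jv3 (!![(-1154:ℝ),1632;816,-1154] *ᵥ x) + jv4 (!![(3:ℝ),-4;-2,3] *ᵥ x) := by
  rw [Matrix.toLin'_apply]
  exact mv4 Cmat !![5,0;0,5] !![3,-4;-2,3] !![-1154,1632;816,-1154] x

/-! ### Span helpers -/

lemma span_pair_le {V : Type*} [AddCommGroup V] [Module ℝ V] (a b : V) (S : Submodule ℝ V)
    (ha : a ∈ S) (hb : b ∈ S) : Submodule.span ℝ (Set.range ![a, b]) ≤ S := by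
  rw [Submodule.span_le]
  rintro y ⟨j, rfl⟩
  fin_cases j
  · simpa using ha
  · simpa using hb

lemma span_pair_dim {V : Type*} [AddCommGroup V] [Module ℝ V] (a b : V)
    (h : LinearIndependent ℝ ![a, b]) :
    Module.finrank ℝ (Submodule.span ℝ (Set.range ![a, b])) = 2 := by
  rw [finrank_span_eq_card h]
  simp

/-! ### Nonvanishing of the characteristic quadratics -/

lemma quadC (mu : ℝ) (hmu : 1 < |mu|) (h1 : mu ≠ 2 + Real.sqrt 3) :
    (2 - mu) * (2 - mu) - 3 * 1 ≠ 0 := by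
  have hfac : (2 - mu) * (2 - mu) - 3 * 1
      = (mu - (2 + Real.sqrt 3)) * (mu - (2 - Real.sqrt 3)) := by
    have := s3; ring_nf; nlinarith [s3]
  rw [hfac]
  apply mul_ne_zero
  · exact sub_ne_zero.mpr h1
  · intro h0
    have hmu' : mu = 2 - Real.sqrt 3 := by linarith [sub_eq_zero.mp h0]
    rcases lt_abs.mp hmu with h | h <;> rw [hmu'] at h <;> linarith [s3bd.1, s3bd.2]

lemma quadD (mu : ℝ) (hmu : 1 < |mu|) (h3 : mu ≠ 3 + 2 * Real.sqrt 2) :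
    (3 - mu) * (3 - mu) - 4 * 2 ≠ 0 := by
  have hfac : (3 - mu) * (3 - mu) - 4 * 2
      = (mu - (3 + 2 * Real.sqrt 2)) * (mu - (3 - 2 * Real.sqrt 2)) := by
    ring_nf; nlinarith [s2]
  rw [hfac]
  apply mul_ne_zero
  · exact sub_ne_zero.mpr h3
  · intro h0
    have hmu' : mu = 3 - 2 * Real.sqrt 2 := by linarith [sub_eq_zero.mp h0]
    rcases lt_abs.mp hmu with h | h <;> rw [hmu'] at h <;> linarith [s2bd.1, s2bd.2]

/-! ### Vanishing of non-dominant generalized eigenspaces -/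

lemma fbot (mu : ℝ) (hmu : 1 < |mu|) (h1 : mu ≠ 2 + Real.sqrt 3)
    (h3 : mu ≠ 3 + 2 * Real.sqrt 2) :
    Module.End.maxGenEigenspace (Matrix.toLin' fmat) mu = ⊥ := by
  apply maxGenEig_eq_bot
  intro v hv
  rw [blockf] at hv
  have hC : ∀ x, (Cmat - mu • 1) *ᵥ x = 0 → x = 0 := by
    apply inj2
    rw [Cmat_def, det2]
    exact quadC mu hmu h1
  have hD : ∀ x, (Dmat - mu • 1) *ᵥ x = 0 → x = 0 := by
    apply inj2
    rw [Dmat_def, det2]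
    exact quadD mu hmu h3
  exact injBlocks _ _ _ (injBlocks _ _ _ hC hC) (injBlocks _ _ _ hD hD) v hv

lemma Hbot (mu : ℝ) (hmu : 1 < |mu|) (h1 : mu ≠ 2 + Real.sqrt 3)
    (h3 : mu ≠ 3 + 2 * Real.sqrt 2) :
    Module.End.maxGenEigenspace (Matrix.toLin' Hmat) mu = ⊥ := by
  apply maxGenEig_eq_bot
  intro v hv
  rw [blockH] at hv
  have hC : ∀ x, (Cmat - mu • 1) *ᵥ x = 0 → x = 0 := by
    apply inj2
    rw [Cmat_def, det2]
    exact quadC mu hmu h1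
  have hD : ∀ x, (!![(3:ℝ),-4;-2,3] - mu • 1) *ᵥ x = 0 → x = 0 := by
    apply inj2
    rw [det2]
    have := quadD mu hmu h3
    intro h0
    apply this
    linarith [h0]
  exact injBlocks _ _ _ (injBlocks _ _ _ hC hC) (injBlocks _ _ _ hD hD) v hv

/-! ### The unstable space of a matrix with two dominant eigenvalues -/

lemma unstable_eq_pair {I : Type*} [Fintype I] [DecidableEq I] (A : Matrix I I ℝ) (a b : ℝ)
    (ha : 1 < |a|) (hb : 1 < |b|)
    (hbot : ∀ mu : ℝ, 1 < |mu| → mu ≠ a → mu ≠ b →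
      Module.End.maxGenEigenspace (Matrix.toLin' A) mu = ⊥) :
    unstableSpace A = Module.End.maxGenEigenspace (Matrix.toLin' A) a
      ⊔ Module.End.maxGenEigenspace (Matrix.toLin' A) b := by
  apply le_antisymm
  · apply iSup_le
    rintro ⟨mu, hmu⟩
    by_cases h1 : mu = a
    · subst h1; exact le_sup_left
    by_cases h2 : mu = b
    · subst h2; exact le_sup_right
    · rw [hbot mu hmu h1 h2]; exact bot_le
  · exact sup_le (le_iSup_of_le ⟨a, ha⟩ le_rfl) (le_iSup_of_le ⟨b, hb⟩ le_rfl)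

/-! ### dimension of the ambient space -/

lemma h8 : Module.finrank ℝ (((Fin 2 ⊕ Fin 2) ⊕ (Fin 2 ⊕ Fin 2)) → ℝ) = 8 := by
  rw [Module.finrank_pi]
  simp

lemma muv_inj : Function.Injective
    ![2 + Real.sqrt 3, 2 - Real.sqrt 3, 3 + 2 * Real.sqrt 2, 3 - 2 * Real.sqrt 2] := by
  intro i j hij
  fin_cases i <;> fin_cases j <;>
    first
    | rfl
    | (simp at hij; linarith [s3bd.1, s3bd.2, s2bd.1, s2bd.2])


theorem stmt10 :
    let E1 := Module.End.maxGenEigenspace (Matrix.toLin' fmat) (2 + Real.sqrt 3)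
    let E3 := Module.End.maxGenEigenspace (Matrix.toLin' fmat) (3 + 2 * Real.sqrt 2)
    let E4 := Module.End.maxGenEigenspace (Matrix.toLin' fmat) (3 - 2 * Real.sqrt 2)
    Cmat ^ 5 * ((Cmat ^ 2)⁻¹) ^ 2 = Cmat
    ∧ Dmat ^ 5 * ((Dmat ^ 3)⁻¹) ^ 2 = Dmat⁻¹
    ∧ 1 < 2 + Real.sqrt 3
    ∧ 0 < 3 - 2 * Real.sqrt 2 ∧ 3 - 2 * Real.sqrt 2 < 1
    ∧ unstableSpace fmat = E1 ⊔ E3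
    ∧ unstableSpace (fmat ^ 5 * (gmat⁻¹) ^ 2) = E1 ⊔ E4
    ∧ E1 ⊔ E3 ≠ E1 ⊔ E4 := by
  intro E1 E3 E4
  have b3 := s3bd
  have b2 := s2bd
  have habs1 : 1 < |2 + Real.sqrt 3| := by
    rw [abs_of_pos (by linarith [b3.1])]; linarith [b3.1]
  have habs3 : 1 < |3 + 2 * Real.sqrt 2| := by
    rw [abs_of_pos (by linarith [b2.1])]; linarith [b2.1]
  -- the eigenvalue vector and its injectivity
  set μv : Fin 4 → ℝ :=
    ![2 + Real.sqrt 3, 2 - Real.sqrt 3, 3 + 2 * Real.sqrt 2, 3 - 2 * Real.sqrt 2] with hμv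
  have hμinj : Function.Injective μv := by
    rw [hμv]; exact muv_inj
  -- generating vectors
  set w1 : Fin 2 → ℝ := ![Real.sqrt 3, 1] with hw1
  set w2 : Fin 2 → ℝ := ![Real.sqrt 3, -1] with hw2
  set u3 : Fin 2 → ℝ := ![Real.sqrt 2, 1] with hu3
  set u4 : Fin 2 → ℝ := ![Real.sqrt 2, -1] with hu4
  set S1 := Submodule.span ℝ (Set.range ![jv1 w1, jv2 w1]) with hS1
  set S2 := Submodule.span ℝ (Set.range ![jv1 w2, jv2 w2]) with hS2
  set S3 := Submodule.span ℝ (Set.range ![jv3 u3, jv4 u3]) with hS3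
  set S4 := Submodule.span ℝ (Set.range ![jv3 u4, jv4 u4]) with hS4
  set Sf : Fin 4 → Submodule ℝ (((Fin 2 ⊕ Fin 2) ⊕ (Fin 2 ⊕ Fin 2)) → ℝ) := ![S1, S2, S3, S4]
    with hSf
  set Sh : Fin 4 → Submodule ℝ (((Fin 2 ⊕ Fin 2) ⊕ (Fin 2 ⊕ Fin 2)) → ℝ) := ![S1, S2, S4, S3]
    with hSh
  have hdimf : ∀ i, Module.finrank ℝ (Sf i) = 2 := by
    intro i
    fin_cases i <;>
      [skip; skip; skip; skip] <;>
      first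
      | exact span_pair_dim _ _ (li_jv12 w1 (Or.inl rfl))
      | exact span_pair_dim _ _ (li_jv12 w2 (Or.inr rfl))
      | exact span_pair_dim _ _ (li_jv34 u3 (Or.inl rfl))
      | exact span_pair_dim _ _ (li_jv34 u4 (Or.inr rfl))
  have hdimh : ∀ i, Module.finrank ℝ (Sh i) = 2 := by
    intro i
    fin_cases i <;>
      first
      | exact span_pair_dim _ _ (li_jv12 w1 (Or.inl rfl))
      | exact span_pair_dim _ _ (li_jv12 w2 (Or.inr rfl))
      | exact span_pair_dim _ _ (li_jv34 u3 (Or.inl rfl))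
      | exact span_pair_dim _ _ (li_jv34 u4 (Or.inr rfl))
  -- memberships for fmat
  have mf1a : jv1 w1 ∈ Module.End.maxGenEigenspace (Matrix.toLin' fmat) (2 + Real.sqrt 3) :=
    mem_max_of_eigen _ _ _ (by rw [f_jv1, eigC1, jv1_smul])
  have mf1b : jv2 w1 ∈ Module.End.maxGenEigenspace (Matrix.toLin' fmat) (2 + Real.sqrt 3) := by
    refine mem_max_of_gen2 _ _ 1 (jv1 w1) _ (by rw [f_jv1, eigC1, jv1_smul]) ?_
    rw [f_jv2, eigC1, jv2_smul, one_smul]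
    exact add_comm _ _
  have mf2a : jv1 w2 ∈ Module.End.maxGenEigenspace (Matrix.toLin' fmat) (2 - Real.sqrt 3) :=
    mem_max_of_eigen _ _ _ (by rw [f_jv1, eigC2, jv1_smul])
  have mf2b : jv2 w2 ∈ Module.End.maxGenEigenspace (Matrix.toLin' fmat) (2 - Real.sqrt 3) := by
    refine mem_max_of_gen2 _ _ 1 (jv1 w2) _ (by rw [f_jv1, eigC2, jv1_smul]) ?_
    rw [f_jv2, eigC2, jv2_smul, one_smul]
    exact add_comm _ _
  have mf3a : jv3 u3 ∈ Module.End.maxGenEigenspace (Matrix.toLin' fmat) (3 + 2 * Real.sqrt 2) :=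
    mem_max_of_eigen _ _ _ (by rw [f_jv3, eigD1, jv3_smul])
  have mf3b : jv4 u3 ∈ Module.End.maxGenEigenspace (Matrix.toLin' fmat) (3 + 2 * Real.sqrt 2) :=
    mem_max_of_eigen _ _ _ (by rw [f_jv4, eigD1, jv4_smul])
  have mf4a : jv3 u4 ∈ Module.End.maxGenEigenspace (Matrix.toLin' fmat) (3 - 2 * Real.sqrt 2) :=
    mem_max_of_eigen _ _ _ (by rw [f_jv3, eigD2, jv3_smul])
  have mf4b : jv4 u4 ∈ Module.End.maxGenEigenspace (Matrix.toLin' fmat) (3 - 2 * Real.sqrt 2) :=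
    mem_max_of_eigen _ _ _ (by rw [f_jv4, eigD2, jv4_smul])
  -- memberships for Hmat
  have mh1a : jv1 w1 ∈ Module.End.maxGenEigenspace (Matrix.toLin' Hmat) (2 + Real.sqrt 3) :=
    mem_max_of_eigen _ _ _ (by rw [H_jv1, eigC1, jv1_smul])
  have mh1b : jv2 w1 ∈ Module.End.maxGenEigenspace (Matrix.toLin' Hmat) (2 + Real.sqrt 3) := by
    refine mem_max_of_gen2 _ _ 5 (jv1 w1) _ (by rw [H_jv1, eigC1, jv1_smul]) ?_
    rw [H_jv2, eigC1, jv2_smul]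
    exact add_comm _ _
  have mh2a : jv1 w2 ∈ Module.End.maxGenEigenspace (Matrix.toLin' Hmat) (2 - Real.sqrt 3) :=
    mem_max_of_eigen _ _ _ (by rw [H_jv1, eigC2, jv1_smul])
  have mh2b : jv2 w2 ∈ Module.End.maxGenEigenspace (Matrix.toLin' Hmat) (2 - Real.sqrt 3) := by
    refine mem_max_of_gen2 _ _ 5 (jv1 w2) _ (by rw [H_jv1, eigC2, jv1_smul]) ?_
    rw [H_jv2, eigC2, jv2_smul]
    exact add_comm _ _
  have mh3a : jv3 u4 ∈ Module.End.maxGenEigenspace (Matrix.toLin' Hmat) (3 + 2 * Real.sqrt 2) :=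
    mem_max_of_eigen _ _ _ (by rw [H_jv3, eigD'2, jv3_smul])
  have mh3b : jv4 u4 ∈ Module.End.maxGenEigenspace (Matrix.toLin' Hmat) (3 + 2 * Real.sqrt 2) := by
    refine mem_max_of_gen2 _ _ (-1154 - 816 * Real.sqrt 2) (jv3 u4) _
      (by rw [H_jv3, eigD'2, jv3_smul]) ?_
    rw [H_jv4, eigD'2, eigB2, jv3_smul, jv4_smul]
    exact add_comm _ _
  have mh4a : jv3 u3 ∈ Module.End.maxGenEigenspace (Matrix.toLin' Hmat) (3 - 2 * Real.sqrt 2) :=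
    mem_max_of_eigen _ _ _ (by rw [H_jv3, eigD'1, jv3_smul])
  have mh4b : jv4 u3 ∈ Module.End.maxGenEigenspace (Matrix.toLin' Hmat) (3 - 2 * Real.sqrt 2) := by
    refine mem_max_of_gen2 _ _ (-1154 + 816 * Real.sqrt 2) (jv3 u3) _
      (by rw [H_jv3, eigD'1, jv3_smul]) ?_
    rw [H_jv4, eigD'1, eigB1, jv3_smul, jv4_smul]
    exact add_comm _ _
  have hlef : ∀ i, Sf i ≤ Module.End.maxGenEigenspace (Matrix.toLin' fmat) (μv i) := by
    intro i
    fin_cases i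
    · exact span_pair_le _ _ _ mf1a mf1b
    · exact span_pair_le _ _ _ mf2a mf2b
    · exact span_pair_le _ _ _ mf3a mf3b
    · exact span_pair_le _ _ _ mf4a mf4b
  have hleh : ∀ i, Sh i ≤ Module.End.maxGenEigenspace (Matrix.toLin' Hmat) (μv i) := by
    intro i
    fin_cases i
    · exact span_pair_le _ _ _ mh1a mh1b
    · exact span_pair_le _ _ _ mh2a mh2b
    · exact span_pair_le _ _ _ mh3a mh3b
    · exact span_pair_le _ _ _ mh4a mh4b
  have hfs := four_spaces h8 (Matrix.toLin' fmat) μv hμinj Sf hlef hdimf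
  have hhs := four_spaces h8 (Matrix.toLin' Hmat) μv hμinj Sh hleh hdimh
  have hf0 : E1 = S1 := hfs 0
  have hf2 : E3 = S3 := hfs 2
  have hf3 : E4 = S4 := hfs 3
  have hh0 : Module.End.maxGenEigenspace (Matrix.toLin' Hmat) (2 + Real.sqrt 3) = S1 := hhs 0
  have hh2 : Module.End.maxGenEigenspace (Matrix.toLin' Hmat) (3 + 2 * Real.sqrt 2) = S4 := hhs 2
  refine ⟨?_, ?_, ?_, ?_, ?_, ?_, ?_, ?_⟩
  · rw [C2inv]
    norm_num [Cmat, pow_succ, Matrix.mul_fin_two]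
  · rw [D3inv, Dinv]
    norm_num [Dmat, pow_succ, Matrix.mul_fin_two]
  · linarith [b3.1]
  · linarith [b2.2]
  · linarith [b2.1]
  · exact unstable_eq_pair fmat _ _ habs1 habs3 fbot
  · rw [hH, unstable_eq_pair Hmat _ _ habs1 habs3 Hbot, hh0, hh2, hf0, hf3]
  · intro hcontra
    have hE3le : E3 ≤ E1 ⊔ E4 := by
      rw [← hcontra]; exact le_sup_right
    have hdisj : Disjoint E3 (E1 ⊔ E4) := by
      have hind := Module.End.independent_maxGenEigenspace (Matrix.toLin' fmat)
      have := hind.disjoint_biSup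
        (x := 3 + 2 * Real.sqrt 2)
        (y := {2 + Real.sqrt 3, 3 - 2 * Real.sqrt 2})
        (by
          simp only [Set.mem_insert_iff, Set.mem_singleton_iff]
          push_neg
          constructor <;> intro h <;> linarith [b3.1, b3.2, b2.1, b2.2])
      refine Disjoint.mono_right ?_ this
      exact sup_le (le_biSup (Module.End.maxGenEigenspace (Matrix.toLin' fmat)) (by simp : (2 + Real.sqrt 3) ∈ ({2 + Real.sqrt 3, 3 - 2 * Real.sqrt 2} : Set ℝ)))
        (le_biSup (Module.End.maxGenEigenspace (Matrix.toLin' fmat)) (by simp : (3 - 2 * Real.sqrt 2) ∈ ({2 + Real.sqrt 3, 3 - 2 * Real.sqrt 2} : Set ℝ)))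
    have hbot3 : E3 = ⊥ := by
      rw [eq_bot_iff]
      exact le_trans (le_inf le_rfl hE3le) (hdisj.le_bot)
    have : jv3 u3 ∈ E3 := mf3a
    rw [hbot3] at this
    have h0 : jv3 u3 = 0 := by simpa using this
    have := congrFun h0 (Sum.inr (Sum.inl 1))
    simp [jv3, hu3] at this
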